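/- Fix a real number a > 1 and define m_k = (a^{k+1} − a^{−(k+1)})/(a − a^{−1}) for k ∈ ℕ. Let T be the bounded operator on ℓ²(ℕ; ℂ) determined by T e_k = √(m_1/2)·(√(m_k/m_{k+1})·e_{k+1} − √(m_{k+1}/m_k)·e_k). Then the series ζ = √(2/m_1)·Σ_{i=0}^∞ e_i/√(m_i·m_{i+1}) converges in ℓ²(ℕ; ℂ) and T ζ = −e_0. -/

import Mathlib

/-- The Hilbert space `ℓ²(ℕ; ℂ)`. -/
noncomputable abbrev L2N : Type := lp (fun _ : ℕ => ℂ) 2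

/-- The standard orthonormal basis vector `e k` of `ℓ²(ℕ; ℂ)`. -/
noncomputable def stdVec (k : ℕ) : L2N := lp.single 2 k (1 : ℂ)

lemma norm_stdVec (k : ℕ) : ‖stdVec k‖ = 1 := by
  have := lp.norm_single (p := 2) (E := fun _ : ℕ => ℂ) (by norm_num)
    k (1 : ℂ)
  simpa [stdVec] using this

/-- **The fixed vector of the path cocycle of `A_o(Q)`** (formula (5) of Section 4.1 and
Theorem 4.2 of the paper).
Fix `a > 1`, let `m_k = (a^{k+1} − a^{−(k+1)})/(a − a^{−1})`, and let `T` be the bounded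
operator on `ℓ²(ℕ; ℂ)` with `T e_k = √(m₁/2)·(√(m_k/m_{k+1})·e_{k+1} − √(m_{k+1}/m_k)·e_k)`.
Then the series `ζ = √(2/m₁)·Σ_{i≥0} e_i/√(m_i·m_{i+1})` converges in `ℓ²(ℕ; ℂ)` and
`T ζ = −e_0`. -/
theorem stmt_9 (a : ℝ) (ha : 1 < a) (m : ℕ → ℝ)
    (hm : ∀ k : ℕ, m k = (a ^ (k + 1) - (a ^ (k + 1))⁻¹) / (a - a⁻¹))
    (T : L2N →L[ℂ] L2N)
    (hT : ∀ k : ℕ, T (stdVec k) = (Real.sqrt (m 1 / 2) : ℂ) •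
        ((Real.sqrt (m k / m (k + 1)) : ℂ) • stdVec (k + 1)
          - (Real.sqrt (m (k + 1) / m k) : ℂ) • stdVec k)) :
    ∃ ζ : L2N,
      HasSum (fun i : ℕ =>
        ((Real.sqrt (2 / m 1) / Real.sqrt (m i * m (i + 1)) : ℝ) : ℂ) • stdVec i) ζ ∧
      T ζ = -stdVec 0 := by
  have ha0 : (0:ℝ) < a := lt_trans one_pos ha
  have hinv : a⁻¹ < 1 := by
    rw [inv_lt_one_iff₀]; right; exact ha
  have hinv0 : (0:ℝ) ≤ a⁻¹ := by positivity
  have hd : (0:ℝ) < a - a⁻¹ := by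
    have : a⁻¹ < a := lt_trans hinv ha
    linarith
  -- lower bound m k ≥ a^k
  have hmge : ∀ k, a ^ k ≤ m k := by
    intro k
    rw [hm k, le_div_iff₀ hd]
    have hik : (a ^ (k+1))⁻¹ ≤ a ^ k * a⁻¹ := by
      have h1 : (a ^ (k+1))⁻¹ ≤ a⁻¹ := by
        apply inv_anti₀ ha0
        calc a = a ^ 1 := (pow_one a).symm
        _ ≤ a ^ (k+1) := pow_le_pow_right₀ ha.le (by omega)
      have h2 : a⁻¹ ≤ a ^ k * a⁻¹ := by
        have hk1 : (1:ℝ) ≤ a ^ k := one_le_pow₀ ha.le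
        nlinarith [inv_pos.mpr ha0]
      linarith
    have hre : a ^ k * (a - a⁻¹) = a ^ (k+1) - a ^ k * a⁻¹ := by ring
    rw [hre]
    linarith
  have hmpos : ∀ k, 0 < m k := fun k => lt_of_lt_of_le (pow_pos ha0 k) (hmge k)
  have hm0 : m 0 = 1 := by
    rw [hm 0]
    norm_num
    exact hd.ne'
  -- the coefficients
  set c : ℕ → ℝ := fun i => Real.sqrt (2 / m 1) / Real.sqrt (m i * m (i + 1)) with hc
  have hc0 : ∀ i, 0 ≤ c i := fun i => by positivity
  set F : ℕ → L2N := fun i => ((c i : ℝ) : ℂ) • stdVec i with hF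
  -- summability of F
  have hcb : ∀ i, c i ≤ Real.sqrt (2 / m 1) * a⁻¹ ^ i := by
    intro i
    have hpow : a ^ i ≤ Real.sqrt (m i * m (i + 1)) := by
      have h1 : (a ^ i) ^ 2 ≤ m i * m (i + 1) := by
        have := hmge i
        have h2 := hmge (i+1)
        have h3 : a ^ i ≤ a ^ (i+1) := pow_le_pow_right₀ ha.le (by omega)
        nlinarith [pow_pos ha0 i]
      calc a ^ i = Real.sqrt ((a ^ i) ^ 2) := (Real.sqrt_sq (by positivity)).symm
      _ ≤ Real.sqrt (m i * m (i + 1)) := Real.sqrt_le_sqrt h1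
    calc c i ≤ Real.sqrt (2 / m 1) / a ^ i := by
          apply div_le_div_of_nonneg_left (by positivity) (pow_pos ha0 i) hpow
    _ = Real.sqrt (2 / m 1) * a⁻¹ ^ i := by
          rw [div_eq_mul_inv, inv_pow]
  have hsumF : Summable F := by
    apply Summable.of_norm_bounded (g := fun i => Real.sqrt (2 / m 1) * a⁻¹ ^ i)
      ((summable_geometric_of_lt_one hinv0 hinv).mul_left _)
    intro i
    rw [hF, norm_smul, norm_stdVec, mul_one, Complex.norm_real,
      Real.norm_eq_abs, abs_of_nonneg (hc0 i)]
    exact hcb i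
  set ζ : L2N := ∑' i, F i with hζdef
  have hζ : HasSum F ζ := hsumF.hasSum
  refine ⟨ζ, hζ, ?_⟩
  -- the image of ζ under T
  have hTζ : HasSum (fun i => T (F i)) (T ζ) := T.hasSum hζ
  -- scalar computations
  have key1 : ∀ i, c i * (Real.sqrt (m 1 / 2) * Real.sqrt (m i / m (i + 1)))
      = (m (i + 1))⁻¹ := by
    intro i
    have hp := hmpos i; have hq := hmpos (i+1); have h1 := hmpos 1
    rw [hc]
    rw [div_mul_eq_mul_div, ← Real.sqrt_mul (by positivity),
      ← Real.sqrt_mul (by positivity), ← Real.sqrt_div (by positivity)]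
    rw [show 2 / m 1 * (m 1 / 2 * (m i / m (i+1))) / (m i * m (i+1))
        = ((m (i+1))⁻¹) ^ 2 by field_simp]
    exact Real.sqrt_sq (by positivity)
  have key2 : ∀ i, c i * (Real.sqrt (m 1 / 2) * Real.sqrt (m (i + 1) / m i))
      = (m i)⁻¹ := by
    intro i
    have hp := hmpos i; have hq := hmpos (i+1); have h1 := hmpos 1
    rw [hc]
    rw [div_mul_eq_mul_div, ← Real.sqrt_mul (by positivity),
      ← Real.sqrt_mul (by positivity), ← Real.sqrt_div (by positivity)]
    rw [show 2 / m 1 * (m 1 / 2 * (m (i+1) / m i)) / (m i * m (i+1))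
        = ((m i)⁻¹) ^ 2 by field_simp]
    exact Real.sqrt_sq (by positivity)
  set g : ℕ → L2N := fun j => (((m j)⁻¹ : ℝ) : ℂ) • stdVec j with hg
  have hfun : (fun i => T (F i)) = fun i => g (i + 1) - g i := by
    funext i
    rw [hF]
    simp only [map_smul, hT i, smul_sub, smul_smul, hg]
    congr 1
    · congr 1
      rw [← Complex.ofReal_mul, ← Complex.ofReal_mul]
      exact congrArg Complex.ofReal (key1 i)
    · congr 1
      rw [← Complex.ofReal_mul, ← Complex.ofReal_mul]
      exact congrArg Complex.ofReal (key2 i)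
  rw [hfun] at hTζ
  -- telescoping
  have h1 : Filter.Tendsto (fun n => ∑ i ∈ Finset.range n, (g (i + 1) - g i))
      Filter.atTop (nhds (T ζ)) := hTζ.tendsto_sum_nat
  have h2 : (fun n => ∑ i ∈ Finset.range n, (g (i + 1) - g i))
      = fun n => g n - g 0 := by
    funext n; exact Finset.sum_range_sub g n
  rw [h2] at h1
  have hgz : Filter.Tendsto g Filter.atTop (nhds 0) := by
    rw [tendsto_zero_iff_norm_tendsto_zero]
    apply squeeze_zero (fun n => norm_nonneg _) (g := fun n => a⁻¹ ^ n)
    · intro n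
      rw [hg, norm_smul, norm_stdVec, mul_one, Complex.norm_real,
        Real.norm_eq_abs, abs_of_nonneg (inv_nonneg.mpr (hmpos n).le)]
      rw [inv_pow]
      apply inv_anti₀ (pow_pos ha0 n) (hmge n)
    · exact tendsto_pow_atTop_nhds_zero_of_lt_one hinv0 hinv
  have h3 : Filter.Tendsto (fun n => g n - g 0) Filter.atTop (nhds (0 - g 0)) :=
    hgz.sub tendsto_const_nhds
  have h4 : T ζ = 0 - g 0 := tendsto_nhds_unique h1 h3
  rw [h4, zero_sub]
  simp only [hg, hm0]
  norm_num
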